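/- A finite graph G is bipartite if and only if for every vertex u, the vertices (u,0) and (u,1) lie in different connected components of the bipartite double cover K^G. -/

import Mathlib

/-- The bipartite double cover of a graph `G`: vertices are `V × Bool`, and `(x,i)` is
adjacent to `(y,j)` iff `{x,y} ∈ E(G)` and `i ≠ j`. -/
def doubleCover {V : Type*} (G : SimpleGraph V) : SimpleGraph (V × Bool) where
  Adj a b := G.Adj a.1 b.1 ∧ a.2 ≠ b.2
  symm := ⟨fun _ _ h => ⟨h.1.symm, h.2.symm⟩⟩
  loopless := ⟨fun _ h => h.2 rfl⟩

/-- Along any walk in the double cover, the quantity `(c v = 0) xor i` is invariant,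
given a proper 2-coloring `c`. -/
lemma doubleCover_walk_invariant {V : Type*} (G : SimpleGraph V) (c : G.Coloring (Fin 2)) :
    ∀ {a b : V × Bool}, (doubleCover G).Walk a b →
      ((decide (c a.1 = 0)) ^^ a.2) = ((decide (c b.1 = 0)) ^^ b.2) := by
  intro a b p
  induction p with
  | nil => rfl
  | cons h p ih =>
    rename_i x y z
    refine Eq.trans ?_ ih
    obtain ⟨hadj, hne⟩ := h
    obtain ⟨xv, xb⟩ := x
    obtain ⟨yv, yb⟩ := y
    have hc : c xv ≠ c yv := c.valid hadj
    have hfin : ∀ a b : Fin 2, a ≠ b → (decide (b = 0)) = !decide (a = 0) := by decide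
    have hcc := hfin _ _ hc
    simp only at hne ⊢
    have h2 : yb = !xb := by cases xb <;> cases yb <;> simp_all
    rw [h2, hcc]
    cases xb <;> cases decide (c xv = 0) <;> rfl

/-- Any walk in `G` lifts to the double cover, landing on one of the two fibers. -/
lemma doubleCover_lift {V : Type*} (G : SimpleGraph V) :
    ∀ {x y : V}, G.Walk x y → ∀ b : Bool,
      (doubleCover G).Reachable (x, b) (y, b) ∨
        (doubleCover G).Reachable (x, b) (y, !b) := by
  intro x y p
  induction p with
  | nil => intro b; exact Or.inl (SimpleGraph.Reachable.refl _)
  | cons h p ih =>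
    rename_i x z y
    intro b
    have hstep : (doubleCover G).Adj (x, b) (z, !b) := ⟨h, by cases b <;> simp⟩
    rcases ih (!b) with hr | hr
    · exact Or.inr ((SimpleGraph.Adj.reachable hstep).trans hr)
    · left
      have : (doubleCover G).Reachable (x, b) (y, !!b) :=
        (SimpleGraph.Adj.reachable hstep).trans hr
      simpa using this

/-- A finite graph `G` is bipartite (2-colorable) iff for every vertex `u`, the vertices
`(u, 0)` and `(u, 1)` lie in different connected components of the bipartite double
cover of `G`. -/
theorem bipartite_iff_doubleCover_disconnected {V : Type*} [Fintype V] (G : SimpleGraph V) :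
    G.Colorable 2 ↔ ∀ u : V, ¬ (doubleCover G).Reachable (u, false) (u, true) := by
  constructor
  · rintro ⟨c⟩ u ⟨p⟩
    have := doubleCover_walk_invariant G c p
    simp at this
  · intro h
    classical
    let root : V → V := fun v => (G.connectedComponentMk v).out
    have hroot : ∀ v, G.Reachable (root v) v := by
      intro v
      have : G.connectedComponentMk (root v) = G.connectedComponentMk v :=
        (G.connectedComponentMk v).out_eq
      exact SimpleGraph.ConnectedComponent.exact this
    let c : V → Bool := fun v => decide ((doubleCover G).Reachable ((root v, false)) ((v, true)))
    have hone : ∀ v, (doubleCover G).Reachable (root v, false) (v, c v) := by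
      intro v
      rcases doubleCover_lift G (hroot v).some false with hr | hr
      · have hnc : c v = false := by
          by_contra hcv
          have hcv' : (doubleCover G).Reachable (root v, false) (v, true) := by
            have : c v = true := by cases hcv2 : c v <;> simp_all
            simpa [c] using of_decide_eq_true (by simpa [c] using this)
          exact h v (hr.symm.trans hcv')
        rw [hnc]; exact hr
      · have hct : c v = true := by
          simp only [c, decide_eq_true_iff]
          simpa using hr
        rw [hct]; simpa using hr
    have hvalid : ∀ {v w : V}, G.Adj v w → c v ≠ c w := by
      intro v w hadj hceq
      have hrw : root w = root v := by
        simp only [root]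
        congr 1
        exact SimpleGraph.ConnectedComponent.sound hadj.symm.reachable
      have h1 := hone v
      have h2 := hone w
      rw [hrw] at h2
      have hstep : (doubleCover G).Adj (v, c v) (w, !(c v)) := ⟨hadj, by cases c v <;> simp⟩
      have key : (doubleCover G).Reachable (w, !(c v)) (w, c w) :=
        (hstep.reachable.symm.trans h1.symm).trans h2
      rw [hceq] at key
      cases hcw : c w
      · rw [hcw] at key; exact h w (by simpa using key.symm)
      · rw [hcw] at key; exact h w (by simpa using key)
    exact ⟨⟨fun v => if c v then 0 else 1, by
      intro v w hadj
      have := hvalid hadj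
      cases hv : c v <;> cases hw : c w <;> simp_all⟩⟩
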